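/- Suppose ν ∈ ℕ is such that ker φ_{ν'} = 0 for every ν' < ν and ker φ_ν ≠ 0. Then ker φ_ν is a principal ideal, i.e., there exists P ∈ K[μ_1,…,μ_r, y_0,…,y_ν] with ker φ_ν = (P). (In the language of the paper: the minimal polynomial f_min, whose order is s := ν, generates the principal ideal (y − f, y' − L(f), …, y^{(s)} − L^s(f)) ∩ K[μ, y, y', …, y^{(s)}].) -/

import Mathlib

open MvPolynomial

/-- The `K`-algebra homomorphism `φ_ν : K[μ_1,…,μ_r, y_0,…,y_ν] → K[μ, x]`,
sending `μ_j ↦ μ_j` and `y_k ↦ L^k(f)`. -/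
noncomputable def liePhi {K : Type*} [Field K] [CharZero K] {r n : ℕ}
    (f : MvPolynomial (Fin r ⊕ Fin n) K)
    (L : Derivation ℚ (MvPolynomial (Fin r ⊕ Fin n) K) (MvPolynomial (Fin r ⊕ Fin n) K))
    (ν : ℕ) :
    MvPolynomial (Fin r ⊕ Fin (ν + 1)) K →ₐ[K] MvPolynomial (Fin r ⊕ Fin n) K :=
  aeval (Sum.elim (fun j => X (Sum.inl j)) (fun k : Fin (ν + 1) => (⇑L)^[(k : ℕ)] f))

open Polynomial in
/-- A nonzero prime ideal of `R[X]` over a UFD `R`, lying over `⊥` in `R`, is principal. -/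
lemma key_lemma {R : Type*} [CommRing R] [IsDomain R] [UniqueFactorizationMonoid R]
    (P : Ideal (Polynomial R)) (hPp : P.IsPrime) (hP : P ≠ ⊥)
    (h0 : P.comap (Polynomial.C : R →+* Polynomial R) = ⊥) :
    ∃ p, P = Ideal.span {p} := by
  classical
  set S : Set ℕ := {d | ∃ q ∈ P, q ≠ 0 ∧ q.natDegree = d} with hS
  obtain ⟨q₀, hq₀P, hq₀0⟩ := Submodule.exists_mem_ne_zero_of_ne_bot hP
  have hSne : S.Nonempty := ⟨q₀.natDegree, q₀, hq₀P, hq₀0, rfl⟩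
  obtain ⟨q, hqP, hq0, hqd⟩ := Nat.sInf_mem hSne
  obtain ⟨fac, hfac, hassoc⟩ := UniqueFactorizationMonoid.exists_prime_factors q hq0
  obtain ⟨u, hu⟩ := hassoc
  have hprodP : fac.prod ∈ P := by
    have h1 : fac.prod = q * ↑u⁻¹ := by rw [← hu, mul_assoc]; simp
    rw [h1]; exact Ideal.mul_mem_right _ _ hqP
  obtain ⟨p, hpfac, hpP⟩ := (hPp.multiset_prod_mem_iff_exists_mem fac).mp hprodP
  have hpprime : Prime p := hfac p hpfac
  have hpdvdq : p ∣ q := (Multiset.dvd_prod hpfac).trans ⟨↑u, hu.symm⟩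
  have hpd : p.natDegree = sInf S := by
    refine le_antisymm ?_ (Nat.sInf_le ⟨p, hpP, hpprime.ne_zero, rfl⟩)
    rw [← hqd]; exact natDegree_le_of_dvd hpdvdq hq0
  have hpdeg : 0 < p.natDegree := by
    rcases Nat.eq_zero_or_pos p.natDegree with h | h
    · exfalso
      have hmem : p.coeff 0 ∈ P.comap (Polynomial.C : R →+* Polynomial R) := by
        simpa [Ideal.mem_comap, ← Polynomial.eq_C_of_natDegree_eq_zero h] using hpP
      rw [h0] at hmem
      simp only [Ideal.mem_bot] at hmem
      exact hpprime.ne_zero (by rw [Polynomial.eq_C_of_natDegree_eq_zero h, hmem, map_zero])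
    · exact h
  refine ⟨p, le_antisymm ?_ ?_⟩
  swap
  · rw [Ideal.span_le, Set.singleton_subset_iff]; exact hpP
  intro f hf
  rw [Ideal.mem_span_singleton]
  let F := FractionRing R
  have hinj : Function.Injective (algebraMap R F) := IsFractionRing.injective R F
  set pF : F[X] := p.map (algebraMap R F) with hpF
  have hpF0 : pF ≠ 0 := Polynomial.map_ne_zero_iff hinj |>.mpr hpprime.ne_zero
  set pM : F[X] := pF * Polynomial.C pF.leadingCoeff⁻¹ with hpM
  have hpMmonic : pM.Monic := monic_mul_leadingCoeff_inv hpF0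
  set fF : F[X] := f.map (algebraMap R F) with hfF
  set qq : F[X] := Polynomial.C pF.leadingCoeff⁻¹ * (fF /ₘ pM) with hqq
  have hpq : pF * qq = pM * (fF /ₘ pM) := by rw [hqq, hpM]; ring
  have hdiv : fF = pF * qq + fF %ₘ pM := by
    rw [hpq, add_comm]; exact (modByMonic_add_div fF pM).symm
  obtain ⟨c, hc⟩ := IsLocalization.integerNormalization_map_to_map (nonZeroDivisors R) qq
  set q' : R[X] := IsLocalization.integerNormalization (nonZeroDivisors R) qq with hq'
  have hc0 : (c : R) ≠ 0 := nonZeroDivisors.coe_ne_zero c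
  set g : R[X] := Polynomial.C (c : R) * f - p * q' with hg
  have hgP : g ∈ P :=
    Ideal.sub_mem _ (Ideal.mul_mem_left _ _ hf) (Ideal.mul_mem_right _ _ hpP)
  have hs : ∀ x : F[X], (c : R) • x = Polynomial.C ((algebraMap R F) (c : R)) * x := fun x => by
    rw [← algebraMap_smul F (c : R) x, Polynomial.smul_eq_C_mul]
  have hgmap : g.map (algebraMap R F) = (c : R) • (fF %ₘ pM) := by
    have hrem : fF %ₘ pM = fF - pF * qq := by linear_combination -hdiv
    rw [hg, Polynomial.map_sub, Polynomial.map_mul, Polynomial.map_mul, Polynomial.map_C, hc,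
      ← hfF, ← hpF, hrem, hs, hs]
    ring
  have hgzero : g = 0 := by
    by_contra hgne
    have hmapne : g.map (algebraMap R F) ≠ 0 := Polynomial.map_ne_zero_iff hinj |>.mpr hgne
    have hdeg1 : (g.map (algebraMap R F)).degree < pM.degree := by
      rw [hgmap, hs]
      calc (Polynomial.C ((algebraMap R F) (c:R)) * (fF %ₘ pM)).degree
          ≤ (Polynomial.C ((algebraMap R F) (c:R))).degree + (fF %ₘ pM).degree := degree_mul_le _ _
        _ ≤ 0 + (fF %ₘ pM).degree := by gcongr; exact Polynomial.degree_C_le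
        _ = (fF %ₘ pM).degree := by rw [zero_add]
        _ < pM.degree := degree_modByMonic_lt _ hpMmonic
    have hdeg2 : pM.degree = p.degree := by
      rw [hpM, degree_mul, Polynomial.degree_C (inv_ne_zero (leadingCoeff_ne_zero.mpr hpF0)), add_zero,
        hpF, degree_map_eq_of_injective hinj]
    have hlt : g.natDegree < p.natDegree := by
      apply Polynomial.natDegree_lt_natDegree hgne
      rw [← degree_map_eq_of_injective hinj g, ← hdeg2]; exact hdeg1
    have hmemS : g.natDegree ∈ S := ⟨g, hgP, hgne, rfl⟩
    have := Nat.sInf_le hmemS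
    omega
  have hdvd : p ∣ Polynomial.C (c : R) * f := ⟨q', by rw [← sub_eq_zero, ← hg]; exact hgzero⟩
  rcases hpprime.2.2 _ _ hdvd with h | h
  · exfalso
    have hle := natDegree_le_of_dvd h (by simp [hc0])
    rw [Polynomial.natDegree_C] at hle
    omega
  · exact h

open MvPolynomial

/-- `α ⊕ Option β ≃ Option (α ⊕ β)`, sending `inr none ↦ none`. -/
def auxSumOptionEquiv (α β : Type*) : α ⊕ Option β ≃ Option (α ⊕ β) where
  toFun x := match x with
    | .inl a => some (.inl a)
    | .inr none => none
    | .inr (some b) => some (.inr b)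
  invFun o := match o with
    | none => .inr none
    | some (.inl a) => .inl a
    | some (.inr b) => .inr (some b)
  left_inv := by rintro (a | _ | b) <;> rfl
  right_inv := by rintro (_ | a | b) <;> rfl

theorem stmt5 {K : Type*} [Field K] [CharZero K] {r n : ℕ} (hn : 1 ≤ n)
    (g : Fin n → MvPolynomial (Fin r ⊕ Fin n) K) (f : MvPolynomial (Fin r ⊕ Fin n) K)
    (L : Derivation ℚ (MvPolynomial (Fin r ⊕ Fin n) K) (MvPolynomial (Fin r ⊕ Fin n) K))
    (hLx : ∀ i, L (X (Sum.inr i)) = g i)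
    (hLmu : ∀ j, L (X (Sum.inl j)) = 0)
    (hLC : ∀ c : K, ∃ c' : K, L (C c) = C c')
    (ν : ℕ)
    (hinj : ∀ ν' < ν, RingHom.ker (liePhi f L ν') = ⊥)
    (hker : RingHom.ker (liePhi f L ν) ≠ ⊥) :
    ∃ P : MvPolynomial (Fin r ⊕ Fin (ν + 1)) K,
      RingHom.ker (liePhi f L ν) = Ideal.span {P} := by
  classical
  set I : Ideal (MvPolynomial (Fin r ⊕ Fin (ν + 1)) K) := RingHom.ker (liePhi f L ν) with hI
  have hIp : I.IsPrime := RingHom.ker_isPrime _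
  -- the variable equivalence
  let eqv : (Fin r ⊕ Fin (ν + 1)) ≃ Option (Fin r ⊕ Fin ν) :=
    (Equiv.sumCongr (Equiv.refl (Fin r)) finSuccEquivLast).trans
      (auxSumOptionEquiv (Fin r) (Fin ν))
  let E : MvPolynomial (Fin r ⊕ Fin (ν + 1)) K ≃ₐ[K]
      Polynomial (MvPolynomial (Fin r ⊕ Fin ν) K) :=
    (renameEquiv K eqv).trans (optionEquivLeft K (Fin r ⊕ Fin ν))
  let σ : (Fin r ⊕ Fin ν) → (Fin r ⊕ Fin (ν + 1)) := Sum.map id Fin.castSucc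
  -- E maps `rename σ a` to `C a`
  have heqv : ∀ v : Fin r ⊕ Fin ν, eqv (σ v) = some v := by
    rintro (j | k)
    · rfl
    · simp only [σ, eqv, Sum.map_inr, Equiv.trans_apply, Equiv.sumCongr_apply,
        Equiv.refl_apply, finSuccEquivLast_castSucc]
      rfl
  have hEX : ∀ v : Fin r ⊕ Fin ν, E (X (σ v)) = Polynomial.C (X v) := by
    intro v
    show (optionEquivLeft K (Fin r ⊕ Fin ν)) (rename eqv (X (σ v))) = Polynomial.C (X v)
    rw [rename_X, heqv v, optionEquivLeft_X_some]
  have hEC : ∀ c : K, E (C c) = Polynomial.C (C c) := by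
    intro c
    show (optionEquivLeft K (Fin r ⊕ Fin ν)) (rename eqv (C c)) = Polynomial.C (C c)
    rw [rename_C, optionEquivLeft_C]
  have hB : ∀ a : MvPolynomial (Fin r ⊕ Fin ν) K,
      E (rename σ a) = Polynomial.C a := by
    intro a
    induction a using MvPolynomial.induction_on with
    | C c => rw [rename_C, hEC]
    | add p q hp hq => rw [map_add, map_add, hp, hq, map_add]
    | mul_X p v hp => rw [map_mul, map_mul, hp, rename_X, hEX, map_mul]
  -- the composite `liePhi ν ∘ rename σ` is injective
  have hker0 : ∀ x : MvPolynomial (Fin r ⊕ Fin ν) K,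
      liePhi f L ν (rename σ x) = 0 → x = 0 := by
    cases ν with
    | zero =>
      intro x hx
      have hcomp : (liePhi f L 0).comp (rename σ : _ →ₐ[K] _) =
          (rename (Sum.map id (fun k : Fin 0 => k.elim0)) :
            MvPolynomial (Fin r ⊕ Fin 0) K →ₐ[K] MvPolynomial (Fin r ⊕ Fin n) K) := by
        apply MvPolynomial.algHom_ext
        rintro (j | k)
        · simp [liePhi, σ, rename_X]
        · exact k.elim0
      have hx' : rename (Sum.map id (fun k : Fin 0 => k.elim0) :
          Fin r ⊕ Fin 0 → Fin r ⊕ Fin n) x = 0 := by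
        rw [← DFunLike.congr_fun hcomp x]; simpa using hx
      have hrinj : Function.Injective (Sum.map id (fun k : Fin 0 => k.elim0) :
          Fin r ⊕ Fin 0 → Fin r ⊕ Fin n) := by
        rintro (a | a) (b | b) h
        · simpa [Sum.map] using h
        · exact b.elim0
        · exact a.elim0
        · exact a.elim0
      exact rename_injective _ hrinj (by simpa using hx')
    | succ m =>
      intro x hx
      have hcomp : (liePhi f L (m + 1)).comp (rename σ : _ →ₐ[K] _) = liePhi f L m := by
        apply MvPolynomial.algHom_ext
        rintro (j | k)
        · simp [liePhi, σ, rename_X]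
        · simp [liePhi, σ, rename_X, Fin.coe_castSucc]
      have hx' : liePhi f L m x = 0 := by
        rw [← DFunLike.congr_fun hcomp x]; simpa using hx
      have := hinj m (Nat.lt_succ_self m)
      have hxmem : x ∈ RingHom.ker (liePhi f L m) := hx'
      rw [this] at hxmem
      simpa using hxmem
  -- transport the ideal
  let Er : MvPolynomial (Fin r ⊕ Fin (ν + 1)) K ≃+*
      Polynomial (MvPolynomial (Fin r ⊕ Fin ν) K) := E.toRingEquiv
  let J : Ideal (Polynomial (MvPolynomial (Fin r ⊕ Fin ν) K)) := I.map (Er : _ →+* _)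
  have hJcomap : J = I.comap (Er.symm : _ →+* _) := Ideal.map_comap_of_equiv Er
  have hJp : J.IsPrime := by
    rw [hJcomap]
    exact Ideal.IsPrime.comap _
  have hJne : J ≠ ⊥ := by
    intro h
    exact hker ((Ideal.map_eq_bot_iff_of_injective Er.injective).mp h)
  have hJ0 : J.comap (Polynomial.C :
      MvPolynomial (Fin r ⊕ Fin ν) K →+* Polynomial (MvPolynomial (Fin r ⊕ Fin ν) K)) = ⊥ := by
    rw [hJcomap]
    ext x
    simp only [Ideal.mem_comap, Ideal.mem_bot]
    constructor
    · intro hx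
      have hsymm : (Er.symm : Polynomial (MvPolynomial (Fin r ⊕ Fin ν) K) →+* _) (Polynomial.C x)
          = rename σ x := by
        apply Er.injective
        simpa [Er] using (hB x).symm
      rw [hsymm] at hx
      exact hker0 x (by simpa [hI, RingHom.mem_ker] using hx)
    · rintro rfl
      simp only [map_zero]
      exact I.zero_mem
  obtain ⟨p, hp⟩ := key_lemma J hJp hJne hJ0
  refine ⟨Er.symm p, ?_⟩
  have h1 : I = Ideal.comap (Er : _ →+* _) J :=
    (Ideal.comap_map_of_bijective _ Er.bijective).symm
  have h2 : Ideal.comap (Er : _ →+* _) (Ideal.span {p}) = Ideal.span {Er.symm p} := by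
    ext x
    simp only [Ideal.mem_comap, Ideal.mem_span_singleton]
    constructor
    · rintro ⟨c, hc⟩
      refine ⟨Er.symm c, Er.injective ?_⟩
      rw [map_mul]
      simpa using hc
    · rintro ⟨c, hc⟩
      exact ⟨Er c, by rw [hc, map_mul]; simp⟩
  rw [h1, hp, h2]
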